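/- Let (Ω, F, P) be a probability space, T ≥ 1 a natural number, and X_1,…,X_T nonnegative real-valued random variables. Let t' > 0 and p' ∈ [0,1] be such that for each i ∈ {1,…,T}, the conditional probability satisfies P(X_i ≤ t' ∣ σ(X_1,…,X_{i−1})) ≤ p' almost surely (for i = 1 this means P(X_1 ≤ t') ≤ p'). Then for every real t̂ ≥ 0, P(∑_{i=1}^T X_i ≤ t̂) ≤ exp(t̂/t' − T + 2·p'·T). -/

import Mathlib

open MeasureTheory Finset

private lemma aux_pull {Ω : Type*} [mΩ : MeasurableSpace Ω]
    (P : Measure Ω) [IsProbabilityMeasure P] (p' : ℝ) (g f : Ω → ℝ)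
    (hg0 : ∀ ω, 0 ≤ g ω) (hg1 : ∀ ω, g ω ≤ 1)
    (hgmeas : Measurable g) (hg_int : Integrable g P)
    (hf_int : Integrable f P) (hf0 : 0 ≤ᵐ[P] f)
    (hgf_int : Integrable (g * f) P)
    {m : MeasurableSpace Ω} (hm : m ≤ mΩ) (hgm : Measurable[m] g)
    (hcondle : P[f|m] ≤ᵐ[P] fun _ => p') :
    ∫ ω, (g * f) ω ∂P ≤ p' * ∫ ω, g ω ∂P := by
  have hpull : P[g * f|m] =ᵐ[P] g * P[f|m] :=
    condExp_mul_of_stronglyMeasurable_left (Measurable.stronglyMeasurable hgm) hgf_int hf_int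
  have hcenonneg : (0:Ω → ℝ) ≤ᵐ[P] P[f|m] := condExp_nonneg hf0
  rw [← integral_condExp (μ := P) hm (f := g * f), integral_congr_ae hpull]
  have hgce_int : Integrable (g * P[f|m]) P := by
    refine (integrable_condExp).bdd_mul (c := 1) hgmeas.aestronglyMeasurable (Filter.Eventually.of_forall fun ω => ?_)
    rw [Real.norm_eq_abs, abs_of_nonneg (hg0 ω)]; exact hg1 ω
  have hle : ∫ ω, (g * P[f|m]) ω ∂P ≤ ∫ ω, p' * g ω ∂P := by
    refine integral_mono_ae hgce_int (hg_int.const_mul p') ?_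
    filter_upwards [hcondle, hcenonneg] with ω h₁ h₂
    simp only [Pi.mul_apply]
    calc g ω * (P[f|m]) ω ≤ g ω * p' := mul_le_mul_of_nonneg_left h₁ (hg0 ω)
      _ = p' * g ω := mul_comm _ _
  rwa [integral_const_mul] at hle

theorem stmt6 {Ω : Type*} [MeasurableSpace Ω] (P : Measure Ω) [IsProbabilityMeasure P]
    (T : ℕ) (hT : 1 ≤ T) (X : ℕ → Ω → ℝ)
    (hXmeas : ∀ i, Measurable (X i))
    (hXnonneg : ∀ i ω, 0 ≤ X i ω)
    (t' : ℝ) (ht' : 0 < t') (p' : ℝ) (hp'0 : 0 ≤ p') (hp'1 : p' ≤ 1)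
    (hcond : ∀ i, 1 ≤ i → i ≤ T →
      P[(Set.indicator {ω | X i ω ≤ t'} (fun _ => (1 : ℝ))) |
          MeasurableSpace.comap (fun ω (j : Fin (i - 1)) => X ((j : ℕ) + 1) ω) inferInstance]
        ≤ᵐ[P] fun _ => p') :
    ∀ that : ℝ, 0 ≤ that →
      P {ω | ∑ i ∈ Finset.Icc 1 T, X i ω ≤ that} ≤
        ENNReal.ofReal (Real.exp (that / t' - T + 2 * p' * T)) := by
  intro that hthat
  set e1 : ℝ := Real.exp (-1) with he1
  have he1pos : 0 < e1 := Real.exp_pos _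
  have he1lt : e1 < 1 := by rw [he1, Real.exp_lt_one_iff]; norm_num
  set c : ℝ := (1 - e1) * p' + e1 with hc
  have hcpos : 0 < c := by nlinarith
  have hint : ∀ (f : Ω → ℝ), Measurable f → (∀ ω, |f ω| ≤ 1) → Integrable f P := by
    intro f hf hb
    exact (integrable_const (1:ℝ)).mono' hf.aestronglyMeasurable (Filter.Eventually.of_forall hb)
  have hprod_nonneg : ∀ n ω, 0 ≤ ∏ i ∈ Icc 1 n, Real.exp (-X i ω / t') := fun n ω =>
    Finset.prod_nonneg fun i _ => (Real.exp_pos _).le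
  have hprod_le_one : ∀ n ω, ∏ i ∈ Icc 1 n, Real.exp (-X i ω / t') ≤ 1 := by
    intro n ω
    apply Finset.prod_le_one (fun i _ => (Real.exp_pos _).le)
    intro i _
    rw [Real.exp_le_one_iff]
    have := hXnonneg i ω
    exact div_nonpos_of_nonpos_of_nonneg (by linarith) ht'.le
  have hprod_meas : ∀ n, Measurable (fun ω => ∏ i ∈ Icc 1 n, Real.exp (-X i ω / t')) := by
    intro n
    exact Finset.measurable_prod _ fun i _ =>
      Real.measurable_exp.comp ((hXmeas i).neg.div_const t')
  have hprod_int : ∀ n, Integrable (fun ω => ∏ i ∈ Icc 1 n, Real.exp (-X i ω / t')) P := by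
    intro n
    refine hint _ (hprod_meas n) fun ω => ?_
    rw [abs_of_nonneg (hprod_nonneg n ω)]
    exact hprod_le_one n ω
  -- key induction
  have key : ∀ n, n ≤ T → ∫ ω, ∏ i ∈ Icc 1 n, Real.exp (-X i ω / t') ∂P ≤ c ^ n := by
    intro n
    induction n with
    | zero => intro _; simp
    | succ n ih =>
      intro hn1
      have hnT : n ≤ T := Nat.le_of_succ_le hn1
      have ihn := ih hnT
      set F : Ω → Fin n → ℝ := fun ω j => X ((j:ℕ)+1) ω with hF
      have hFmeas : Measurable F := measurable_pi_lambda _ fun j => hXmeas _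
      have hm : MeasurableSpace.comap F inferInstance ≤ ‹MeasurableSpace Ω› := hFmeas.comap_le
      have hFm : Measurable[MeasurableSpace.comap F inferInstance] F :=
        Measurable.of_comap_le le_rfl
      set g : Ω → ℝ := fun ω => ∏ i ∈ Icc 1 n, Real.exp (-X i ω / t') with hg
      have hg01 : ∀ ω, 0 ≤ g ω ∧ g ω ≤ 1 := fun ω => ⟨hprod_nonneg n ω, hprod_le_one n ω⟩
      have hgm : Measurable[MeasurableSpace.comap F inferInstance] g := by
        apply Finset.measurable_prod
        intro i hi
        obtain ⟨hi1, hi2⟩ := Finset.mem_Icc.mp hi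
        have hXim : Measurable[MeasurableSpace.comap F inferInstance] (X i) := by
          have hXieq : X i = fun ω => F ω ⟨i-1, by omega⟩ := by
            funext ω; simp only [hF]; congr 1; omega
          rw [hXieq]
          exact (measurable_pi_apply _).comp hFm
        exact Real.measurable_exp.comp (hXim.neg.div_const t')
      set ind : Ω → ℝ := Set.indicator {ω | X (n+1) ω ≤ t'} (fun _ => (1:ℝ)) with hind
      have hindmeas : Measurable ind :=
        Measurable.indicator measurable_const (measurableSet_le (hXmeas _) measurable_const)
      have hind01 : ∀ ω, 0 ≤ ind ω ∧ ind ω ≤ 1 := by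
        intro ω
        by_cases hx : ω ∈ {ω | X (n+1) ω ≤ t'}
        · rw [hind, Set.indicator_of_mem hx]; norm_num
        · rw [hind, Set.indicator_of_notMem hx]; norm_num
      have hgint : Integrable g P := hprod_int n
      have hindint : Integrable ind P := by
        refine hint _ hindmeas fun ω => ?_
        rw [abs_of_nonneg (hind01 ω).1]; exact (hind01 ω).2
      have hgindint : Integrable (g * ind) P := by
        refine hint _ ((hprod_meas n).mul hindmeas) fun ω => ?_
        simp only [Pi.mul_apply]
        rw [abs_of_nonneg (mul_nonneg (hg01 ω).1 (hind01 ω).1)]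
        exact mul_le_one₀ (hg01 ω).2 (hind01 ω).1 (hind01 ω).2
      have hcondle : P[ind|MeasurableSpace.comap F inferInstance] ≤ᵐ[P] fun _ => p' :=
        hcond (n+1) (by omega) hn1
      have h1 : ∫ ω, (g * ind) ω ∂P ≤ p' * ∫ ω, g ω ∂P :=
        aux_pull P p' g ind (fun ω => (hg01 ω).1) (fun ω => (hg01 ω).2)
          (hprod_meas n) hgint hindint
          (Filter.Eventually.of_forall fun ω => (hind01 ω).1) hgindint hm hgm hcondle
      -- pointwise bound
      have hpw : ∀ ω, g ω * Real.exp (-X (n+1) ω / t') ≤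
          (1 - e1) * ((g * ind) ω) + e1 * g ω := by
        intro ω
        have hh : Real.exp (-X (n+1) ω / t') ≤ (1 - e1) * ind ω + e1 := by
          by_cases hx : X (n+1) ω ≤ t'
          · have hmem : ω ∈ {ω | X (n+1) ω ≤ t'} := hx
            rw [hind, Set.indicator_of_mem hmem]
            have h0 : -X (n+1) ω / t' ≤ 0 :=
              div_nonpos_of_nonpos_of_nonneg (by linarith [hXnonneg (n+1) ω]) ht'.le
            have := Real.exp_le_one_iff.mpr h0
            linarith
          · have hmem : ω ∉ {ω | X (n+1) ω ≤ t'} := hx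
            rw [hind, Set.indicator_of_notMem hmem]
            have hgt : t' < X (n+1) ω := not_le.mp hx
            have hle : -X (n+1) ω / t' ≤ -1 := by
              rw [div_le_iff₀ ht']; nlinarith
            have := Real.exp_le_exp.mpr hle
            rw [← he1] at this
            linarith
        have := mul_le_mul_of_nonneg_left hh (hg01 ω).1
        simp only [Pi.mul_apply]
        nlinarith
      have hstep : ∫ ω, ∏ i ∈ Icc 1 (n+1), Real.exp (-X i ω / t') ∂P ≤ c * c ^ n := by
        have hrw : (fun ω => ∏ i ∈ Icc 1 (n+1), Real.exp (-X i ω / t')) =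
            fun ω => g ω * Real.exp (-X (n+1) ω / t') := by
          funext ω
          rw [Finset.prod_Icc_succ_top (by omega)]
        rw [hrw]
        have hlhs_int : Integrable (fun ω => g ω * Real.exp (-X (n+1) ω / t')) P := by
          refine hint _ ((hprod_meas n).mul
            (Real.measurable_exp.comp ((hXmeas (n+1)).neg.div_const t'))) fun ω => ?_
          have h1' : Real.exp (-X (n+1) ω / t') ≤ 1 := Real.exp_le_one_iff.mpr
            (div_nonpos_of_nonpos_of_nonneg (by linarith [hXnonneg (n+1) ω]) ht'.le)
          rw [abs_of_nonneg (mul_nonneg (hg01 ω).1 (Real.exp_pos _).le)]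
          exact mul_le_one₀ (hg01 ω).2 (Real.exp_pos _).le h1'
        have hrhs_int : Integrable (fun ω => (1 - e1) * ((g * ind) ω) + e1 * g ω) P :=
          (hgindint.const_mul (1 - e1)).add (hgint.const_mul e1)
        calc ∫ ω, g ω * Real.exp (-X (n+1) ω / t') ∂P
            ≤ ∫ ω, ((1 - e1) * ((g * ind) ω) + e1 * g ω) ∂P :=
              integral_mono hlhs_int hrhs_int hpw
          _ = (1 - e1) * ∫ ω, (g * ind) ω ∂P + e1 * ∫ ω, g ω ∂P := by
              rw [integral_add (hgindint.const_mul (1 - e1)) (hgint.const_mul e1),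
                integral_const_mul, integral_const_mul]
          _ ≤ (1 - e1) * (p' * ∫ ω, g ω ∂P) + e1 * ∫ ω, g ω ∂P := by
              have := mul_le_mul_of_nonneg_left h1 (by linarith : (0:ℝ) ≤ 1 - e1)
              linarith
          _ = c * ∫ ω, g ω ∂P := by rw [hc]; ring
          _ ≤ c * c ^ n := mul_le_mul_of_nonneg_left ihn hcpos.le
      calc ∫ ω, ∏ i ∈ Icc 1 (n+1), Real.exp (-X i ω / t') ∂P ≤ c * c ^ n := hstep
        _ = c ^ (n+1) := by ring
  -- Markov
  have hseteq : {ω | ∑ i ∈ Icc 1 T, X i ω ≤ that} =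
      {ω | Real.exp (-that / t') ≤ ∏ i ∈ Icc 1 T, Real.exp (-X i ω / t')} := by
    ext ω
    have hSeq : ∏ i ∈ Icc 1 T, Real.exp (-X i ω / t') =
        Real.exp (-(∑ i ∈ Icc 1 T, X i ω) / t') := by
      rw [← Real.exp_sum]
      congr 1
      simp only [neg_div, Finset.sum_neg_distrib, Finset.sum_div]
    simp only [Set.mem_setOf_eq, hSeq, Real.exp_le_exp]
    rw [div_le_div_iff_of_pos_right ht', neg_le_neg_iff]
  have hmarkov := mul_meas_ge_le_integral_of_nonneg (μ := P)
    (Filter.Eventually.of_forall (hprod_nonneg T)) (hprod_int T) (Real.exp (-that / t'))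
  have htr : (P {ω | ∑ i ∈ Icc 1 T, X i ω ≤ that}).toReal ≤
      Real.exp (that / t') * ∫ ω, ∏ i ∈ Icc 1 T, Real.exp (-X i ω / t') ∂P := by
    rw [hseteq]
    calc (P {ω | Real.exp (-that / t') ≤ ∏ i ∈ Icc 1 T, Real.exp (-X i ω / t')}).toReal
        = Real.exp (that / t') * (Real.exp (-that / t') *
            (P {ω | Real.exp (-that / t') ≤ ∏ i ∈ Icc 1 T, Real.exp (-X i ω / t')}).toReal) := by
          rw [← mul_assoc, ← Real.exp_add]
          have hz : that / t' + -that / t' = 0 := by ring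
          rw [hz, Real.exp_zero, one_mul]
      _ ≤ Real.exp (that / t') * ∫ ω, ∏ i ∈ Icc 1 T, Real.exp (-X i ω / t') ∂P :=
          mul_le_mul_of_nonneg_left hmarkov (Real.exp_nonneg _)
  have hcle : c ≤ Real.exp (2 * p' - 1) := by
    have h2 : 2 * p' + 1 ≤ Real.exp (2 * p') := Real.add_one_le_exp _
    have h3 : Real.exp (2 * p' - 1) = e1 * Real.exp (2 * p') := by
      rw [he1, ← Real.exp_add]; ring_nf
    have he3 : 1 ≤ 3 * e1 := by
      have hd : Real.exp 1 < 2.7182818286 := Real.exp_one_lt_d9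
      have hinv : e1 = (Real.exp 1)⁻¹ := by rw [he1, Real.exp_neg]
      rw [hinv, le_mul_inv_iff₀ (Real.exp_pos 1)]
      linarith
    rw [h3, hc]
    nlinarith [mul_le_mul_of_nonneg_left h2 he1pos.le]
  have hfinal : Real.exp (that / t') * c ^ T ≤ Real.exp (that / t' - T + 2 * p' * T) := by
    calc Real.exp (that / t') * c ^ T
        ≤ Real.exp (that / t') * Real.exp (2 * p' - 1) ^ T :=
          mul_le_mul_of_nonneg_left (pow_le_pow_left₀ hcpos.le hcle T) (Real.exp_nonneg _)
      _ = Real.exp (that / t' - T + 2 * p' * T) := by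
          rw [← Real.exp_nat_mul, ← Real.exp_add]
          congr 1
          push_cast
          ring
  rw [ENNReal.le_ofReal_iff_toReal_le (measure_ne_top P _) (Real.exp_nonneg _)]
  calc (P {ω | ∑ i ∈ Icc 1 T, X i ω ≤ that}).toReal
      ≤ Real.exp (that / t') * ∫ ω, ∏ i ∈ Icc 1 T, Real.exp (-X i ω / t') ∂P := htr
    _ ≤ Real.exp (that / t') * c ^ T :=
        mul_le_mul_of_nonneg_left (key T le_rfl) (Real.exp_nonneg _)
    _ ≤ Real.exp (that / t' - T + 2 * p' * T) := hfinal
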